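/- Consider n agents with opinions x_1(t),…,x_n(t) ∈ ℝ evolving according to the Krause model. Then the opinions converge in finite time: there exist x_1*,…,x_n* ∈ ℝ and a time T such that x_i(t) = x_i* for all i and all t ≥ T. Moreover, for any pair i, j, either x_i* = x_j* or |x_i* − x_j*| ≥ 1. -/

import Mathlib

open Finset

namespace KrauseAux

variable {n : ℕ}

lemma avg_le_const {A : Finset (Fin n)} (hA : A.Nonempty) {f : Fin n → ℝ} {M : ℝ}
    (h : ∀ i ∈ A, f i ≤ M) : (∑ i ∈ A, f i) / (A.card : ℝ) ≤ M := by
  have hc : (0:ℝ) < A.card := by exact_mod_cast Finset.card_pos.mpr hA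
  rw [div_le_iff₀ hc]
  calc ∑ i ∈ A, f i ≤ ∑ _i ∈ A, M := Finset.sum_le_sum h
    _ = M * A.card := by rw [Finset.sum_const, nsmul_eq_mul]; ring

lemma const_le_avg {A : Finset (Fin n)} (hA : A.Nonempty) {f : Fin n → ℝ} {M : ℝ}
    (h : ∀ i ∈ A, M ≤ f i) : M ≤ (∑ i ∈ A, f i) / (A.card : ℝ) := by
  have hc : (0:ℝ) < A.card := by exact_mod_cast Finset.card_pos.mpr hA
  rw [le_div_iff₀ hc]
  calc M * A.card = ∑ _i ∈ A, M := by rw [Finset.sum_const, nsmul_eq_mul]; ring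
    _ ≤ ∑ i ∈ A, f i := Finset.sum_le_sum h

lemma const_lt_avg {A : Finset (Fin n)} {f : Fin n → ℝ} {M : ℝ}
    (h : ∀ i ∈ A, M ≤ f i) {j : Fin n} (hj : j ∈ A) (hjf : M < f j) :
    M < (∑ i ∈ A, f i) / (A.card : ℝ) := by
  have hA : A.Nonempty := ⟨j, hj⟩
  have hc : (0:ℝ) < A.card := by exact_mod_cast Finset.card_pos.mpr hA
  rw [lt_div_iff₀ hc]
  have : ∑ _i ∈ A, M < ∑ i ∈ A, f i :=
    Finset.sum_lt_sum h ⟨j, hj, hjf⟩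
  calc M * A.card = ∑ _i ∈ A, M := by rw [Finset.sum_const, nsmul_eq_mul]; ring
    _ < ∑ i ∈ A, f i := this

lemma avg_const {A : Finset (Fin n)} (hA : A.Nonempty) {f : Fin n → ℝ} {v : ℝ}
    (h : ∀ i ∈ A, f i = v) : (∑ i ∈ A, f i) / (A.card : ℝ) = v := by
  have hc : (0:ℝ) < A.card := by exact_mod_cast Finset.card_pos.mpr hA
  rw [Finset.sum_congr rfl h, Finset.sum_const, nsmul_eq_mul]
  field_simp

lemma pair_sum_le {P C : Finset (Fin n)} {f : Fin n → ℝ}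
    (h : ∀ p ∈ P, ∀ c ∈ C, f p ≤ f c) :
    (C.card : ℝ) * ∑ p ∈ P, f p ≤ (P.card : ℝ) * ∑ c ∈ C, f c := by
  have h1 : ∀ p ∈ P, (C.card:ℝ) * f p ≤ ∑ c ∈ C, f c := by
    intro p hp
    calc (C.card:ℝ) * f p = ∑ _c ∈ C, f p := by rw [Finset.sum_const, nsmul_eq_mul]
      _ ≤ ∑ c ∈ C, f c := Finset.sum_le_sum (h p hp)
  calc (C.card:ℝ) * ∑ p ∈ P, f p = ∑ p ∈ P, (C.card:ℝ) * f p := by rw [Finset.mul_sum]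
    _ ≤ ∑ _p ∈ P, ∑ c ∈ C, f c := Finset.sum_le_sum h1
    _ = (P.card:ℝ) * ∑ c ∈ C, f c := by rw [Finset.sum_const, nsmul_eq_mul]

lemma avg_le_avg {A B : Finset (Fin n)} {f : Fin n → ℝ} (hA : A.Nonempty) (hB : B.Nonempty)
    (h1 : ∀ p ∈ A, p ∉ B → ∀ q ∈ B, f p ≤ f q)
    (h2 : ∀ q ∈ B, q ∉ A → ∀ p ∈ A, f p ≤ f q) :
    (∑ i ∈ A, f i) / (A.card : ℝ) ≤ (∑ i ∈ B, f i) / (B.card : ℝ) := by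
  have hcA : (0:ℝ) < A.card := by exact_mod_cast Finset.card_pos.mpr hA
  have hcB : (0:ℝ) < B.card := by exact_mod_cast Finset.card_pos.mpr hB
  rcases (A ∩ B).eq_empty_or_nonempty with hC | hC
  · -- disjoint case
    have hall : ∀ p ∈ A, ∀ q ∈ B, f p ≤ f q := by
      intro p hp q hq
      refine h1 p hp ?_ q hq
      intro hpB
      exact absurd (Finset.mem_inter.mpr ⟨hp, hpB⟩) (by simp [hC])
    have := pair_sum_le hall
    rw [div_le_div_iff₀ hcA hcB]
    linarith
  · set C := A ∩ B with hCdef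
    have hCA : C ⊆ A := Finset.inter_subset_left
    have hCB : C ⊆ B := Finset.inter_subset_right
    have hcC : (0:ℝ) < C.card := by exact_mod_cast Finset.card_pos.mpr hC
    -- A = C ∪ (A \ B)
    have hsumA : ∑ i ∈ C, f i + ∑ i ∈ A \ B, f i = ∑ i ∈ A, f i :=
      Finset.sum_inter_add_sum_sdiff A B f
    have hcardA : C.card + (A \ B).card = A.card := by
      have := Finset.sum_inter_add_sum_sdiff A B (fun _ => (1:ℝ))
      simpa [Finset.sum_const, nsmul_eq_mul] using by exact_mod_cast Finset.card_inter_add_card_sdiff A B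
    have hsumB : ∑ i ∈ C, f i + ∑ i ∈ B \ A, f i = ∑ i ∈ B, f i := by
      rw [hCdef, Finset.inter_comm]
      exact Finset.sum_inter_add_sum_sdiff B A f
    have hcardB : C.card + (B \ A).card = B.card := by
      rw [hCdef, Finset.inter_comm]
      exact Finset.card_inter_add_card_sdiff B A
    -- step 1 : avg A ≤ avg C
    have hP : ∀ p ∈ A \ B, ∀ c ∈ C, f p ≤ f c := by
      intro p hp c hc
      have hp' := Finset.mem_sdiff.mp hp
      exact h1 p hp'.1 hp'.2 c (hCB hc)
    have s1 : (∑ i ∈ A, f i) / (A.card : ℝ) ≤ (∑ i ∈ C, f i) / (C.card : ℝ) := by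
      have hps := pair_sum_le hP
      rw [div_le_div_iff₀ hcA hcC]
      have e1 : (A.card : ℝ) = C.card + (A \ B).card := by exact_mod_cast (hcardA.symm)
      calc (∑ i ∈ A, f i) * (C.card:ℝ)
          = (∑ i ∈ C, f i + ∑ i ∈ A \ B, f i) * (C.card:ℝ) := by rw [hsumA]
        _ = (∑ i ∈ C, f i) * (C.card:ℝ) + (C.card:ℝ) * ∑ i ∈ A \ B, f i := by ring
        _ ≤ (∑ i ∈ C, f i) * (C.card:ℝ) + ((A \ B).card:ℝ) * ∑ i ∈ C, f i := by linarith
        _ = (∑ i ∈ C, f i) * ((C.card:ℝ) + (A \ B).card) := by ring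
        _ = (∑ i ∈ C, f i) * (A.card:ℝ) := by rw [← e1]
    -- step 2 : avg C ≤ avg B
    have hQ : ∀ c ∈ C, ∀ q ∈ B \ A, f c ≤ f q := by
      intro c hc q hq
      have hq' := Finset.mem_sdiff.mp hq
      exact h2 q hq'.1 hq'.2 c (hCA hc)
    have s2 : (∑ i ∈ C, f i) / (C.card : ℝ) ≤ (∑ i ∈ B, f i) / (B.card : ℝ) := by
      have hps := pair_sum_le hQ
      rw [div_le_div_iff₀ hcC hcB]
      have e1 : (B.card : ℝ) = C.card + (B \ A).card := by exact_mod_cast (hcardB.symm)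
      calc (∑ i ∈ C, f i) * (B.card:ℝ)
          = (∑ i ∈ C, f i) * ((C.card:ℝ) + (B \ A).card) := by rw [← e1]
        _ = (∑ i ∈ C, f i) * (C.card:ℝ) + ((B \ A).card:ℝ) * ∑ i ∈ C, f i := by ring
        _ ≤ (∑ i ∈ C, f i) * (C.card:ℝ) + (C.card:ℝ) * ∑ i ∈ B \ A, f i := by linarith
        _ = (∑ i ∈ C, f i + ∑ i ∈ B \ A, f i) * (C.card:ℝ) := by ring
        _ = (∑ i ∈ B, f i) * (C.card:ℝ) := by rw [hsumB]
    exact s1.trans s2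

/-- The Krause dynamics restricted to a set `S` of agents. -/
def KDyn (S : Finset (Fin n)) (x : ℕ → Fin n → ℝ) : Prop :=
  ∀ t, ∀ i ∈ S, x (t + 1) i =
    (∑ j ∈ S.filter (fun j => |x t i - x t j| < 1), x t j) /
    ((S.filter (fun j => |x t i - x t j| < 1)).card : ℝ)

variable {S : Finset (Fin n)} {x : ℕ → Fin n → ℝ}

lemma self_mem_nbr (t : ℕ) {i : Fin n} (hi : i ∈ S) :
    i ∈ S.filter (fun j => |x t i - x t j| < 1) := by
  simp [Finset.mem_filter, hi]

lemma nbr_nonempty (t : ℕ) {i : Fin n} (hi : i ∈ S) :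
    (S.filter (fun j => |x t i - x t j| < 1)).Nonempty :=
  ⟨i, self_mem_nbr t hi⟩

lemma order_pres (hd : KDyn S x) (t : ℕ) {i j : Fin n} (hi : i ∈ S) (hj : j ∈ S)
    (hij : x t i ≤ x t j) : x (t + 1) i ≤ x (t + 1) j := by
  rw [hd t i hi, hd t j hj]
  apply avg_le_avg (nbr_nonempty t hi) (nbr_nonempty t hj)
  · intro p hp hpn q hq
    simp only [Finset.mem_filter] at hp hq
    have h1 : ¬ |x t j - x t p| < 1 := fun h => hpn (Finset.mem_filter.mpr ⟨hp.1, h⟩)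
    have h1' : 1 ≤ |x t j - x t p| := not_lt.mp h1
    have h2 := abs_lt.mp hp.2
    have h3 := abs_lt.mp hq.2
    rcases le_abs'.mp h1' with h4 | h4 <;> linarith
  · intro q hq hqn p hp
    simp only [Finset.mem_filter] at hp hq
    have h1 : ¬ |x t i - x t q| < 1 := fun h => hqn (Finset.mem_filter.mpr ⟨hq.1, h⟩)
    have h1' : 1 ≤ |x t i - x t q| := not_lt.mp h1
    have h2 := abs_lt.mp hp.2
    have h3 := abs_lt.mp hq.2
    rcases le_abs'.mp h1' with h4 | h4 <;> linarith

lemma eq_step (hd : KDyn S x) (t : ℕ) {i j : Fin n} (hi : i ∈ S) (hj : j ∈ S)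
    (h : x t i = x t j) : x (t + 1) i = x (t + 1) j := by
  rw [hd t i hi, hd t j hj, h]

lemma ub_persist (hd : KDyn S x) {M : ℝ} (h0 : ∀ j ∈ S, x 0 j ≤ M) :
    ∀ t, ∀ j ∈ S, x t j ≤ M := by
  intro t
  induction t with
  | zero => exact h0
  | succ t ih =>
    intro j hj
    rw [hd t j hj]
    exact avg_le_const (nbr_nonempty t hj)
      (fun k hk => ih k (Finset.mem_filter.mp hk).1)

lemma min_persist (hd : KDyn S x) {i0 : Fin n} (hi0 : i0 ∈ S)
    (h0 : ∀ j ∈ S, x 0 i0 ≤ x 0 j) : ∀ t, ∀ j ∈ S, x t i0 ≤ x t j := by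
  intro t
  induction t with
  | zero => exact h0
  | succ t ih => exact fun j hj => order_pres hd t hi0 hj (ih j hj)

lemma image_step (hd : KDyn S x) (t : ℕ) : ∃ g : ℝ → ℝ, ∀ i ∈ S, x (t + 1) i = g (x t i) :=
  ⟨fun v => (∑ j ∈ S.filter (fun j => |v - x t j| < 1), x t j) /
    ((S.filter (fun j => |v - x t j| < 1)).card : ℝ), fun i hi => hd t i hi⟩

lemma image_card_mono (hd : KDyn S x) (t : ℕ) :
    (S.image (x (t + 1))).card ≤ (S.image (x t)).card := by
  obtain ⟨g, hg⟩ := image_step hd t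
  have h1 : S.image (x (t + 1)) = S.image (g ∘ x t) :=
    Finset.image_congr (fun i hi => hg i hi)
  rw [h1, ← Finset.image_image]
  exact Finset.card_image_le

lemma image_card_anti (hd : KDyn S x) : ∀ s t : ℕ, s ≤ t →
    (S.image (x t)).card ≤ (S.image (x s)).card := by
  intro s t hst
  induction t, hst using Nat.le_induction with
  | base => exact le_rfl
  | succ t hst ih => exact le_trans (image_card_mono hd t) ih

lemma merge_decrease (hd : KDyn S x) (t : ℕ) {i0 j1 : Fin n} (hi0 : i0 ∈ S) (hj1 : j1 ∈ S)
    (hne : x t i0 ≠ x t j1) (heq : x (t + 1) i0 = x (t + 1) j1) :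
    (S.image (x (t + 1))).card < (S.image (x t)).card := by
  obtain ⟨g, hg⟩ := image_step hd t
  set V := S.image (x t) with hV
  have hgab : g (x t i0) = g (x t j1) := by rw [← hg i0 hi0, ← hg j1 hj1]; exact heq
  have h1 : S.image (x (t + 1)) = V.image g := by
    rw [hV, Finset.image_image]
    exact Finset.image_congr (fun i hi => hg i hi)
  have h2 : V.image g = (V.erase (x t j1)).image g := by
    apply Finset.Subset.antisymm
    · intro v hv
      rw [Finset.mem_image] at hv ⊢
      obtain ⟨w, hw, rfl⟩ := hv
      by_cases hwb : w = x t j1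
      · subst hwb
        exact ⟨x t i0, Finset.mem_erase.mpr ⟨hne, Finset.mem_image_of_mem _ hi0⟩, hgab⟩
      · exact ⟨w, Finset.mem_erase.mpr ⟨hwb, hw⟩, rfl⟩
    · exact Finset.image_subset_image (Finset.erase_subset _ _)
  have hbV : x t j1 ∈ V := Finset.mem_image_of_mem _ hj1
  calc (S.image (x (t + 1))).card = ((V.erase (x t j1)).image g).card := by rw [h1, h2]
    _ ≤ (V.erase (x t j1)).card := Finset.card_image_le
    _ < V.card := Finset.card_erase_lt_of_mem hbV

lemma gap_invariant (hd : KDyn S x) (t : ℕ) (a : ℝ)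
    (H : ∀ j ∈ S, x t j = a ∨ a + 1 ≤ x t j) :
    ∀ s, ∀ j ∈ S, (x t j = a → x (t + s) j = a) ∧ (a + 1 ≤ x t j → a + 1 ≤ x (t + s) j) := by
  intro s
  induction s with
  | zero => exact fun j _ => ⟨fun h => h, fun h => h⟩
  | succ s ih =>
    intro j hj
    have hstep : x (t + (s + 1)) j = x ((t + s) + 1) j := by ring_nf
    constructor
    · intro hbot
      have hs : x (t + s) j = a := (ih j hj).1 hbot
      rw [hstep, hd (t + s) j hj]
      apply avg_const ⟨j, self_mem_nbr (t + s) hj⟩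
      intro k hk
      have hk' := Finset.mem_filter.mp hk
      rcases H k hk'.1 with hk1 | hk2
      · exact (ih k hk'.1).1 hk1
      · exfalso
        have h5 : a + 1 ≤ x (t + s) k := (ih k hk'.1).2 hk2
        have h6 := abs_lt.mp hk'.2
        rw [hs] at h6
        linarith [h6.1]
    · intro htop
      have hs : a + 1 ≤ x (t + s) j := (ih j hj).2 htop
      rw [hstep, hd (t + s) j hj]
      apply const_le_avg ⟨j, self_mem_nbr (t + s) hj⟩
      intro k hk
      have hk' := Finset.mem_filter.mp hk
      rcases H k hk'.1 with hk1 | hk2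
      · exfalso
        have h5 : x (t + s) k = a := (ih k hk'.1).1 hk1
        have h6 := abs_lt.mp hk'.2
        rw [h5] at h6
        linarith [h6.2]
      · exact (ih k hk'.1).2 hk2


lemma min_grow (hd : KDyn S x) (t : ℕ) {i0 j : Fin n} (hi0 : i0 ∈ S) (hj : j ∈ S)
    (hmin : ∀ k ∈ S, x t i0 ≤ x t k) {δ : ℝ} (hδ : 0 ≤ δ)
    (h1 : x t i0 + δ ≤ x t j) (h2 : x t j < x t i0 + 1) :
    x t i0 + δ / (S.card : ℝ) ≤ x (t + 1) i0 := by
  set A := S.filter (fun k => |x t i0 - x t k| < 1) with hA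
  have hjA : j ∈ A := by
    rw [hA, Finset.mem_filter]
    exact ⟨hj, abs_lt.mpr ⟨by linarith, by linarith [hmin j hj]⟩⟩
  have hi0A : i0 ∈ A := self_mem_nbr t hi0
  have hcA : (0:ℝ) < A.card := by
    exact_mod_cast Finset.card_pos.mpr ⟨i0, hi0A⟩
  have hAS : A.card ≤ S.card := Finset.card_le_card (Finset.filter_subset _ _)
  have hcS : (0:ℝ) < S.card := by
    have : (0:ℝ) < A.card := hcA
    have h := (Nat.cast_le (α := ℝ)).mpr hAS
    linarith
  have hsum : (A.card : ℝ) * x t i0 + δ ≤ ∑ k ∈ A, x t k := by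
    have h0 : ∀ k ∈ A, x t i0 ≤ x t k := fun k hk => hmin k (Finset.mem_filter.mp hk).1
    have hone0 := Finset.single_le_sum (f := fun k => x t k - x t i0)
      (fun k hk => sub_nonneg.mpr (h0 k hk)) hjA
    have hone : x t j - x t i0 ≤ ∑ k ∈ A, (x t k - x t i0) := by simpa using hone0
    have hsplit : ∑ k ∈ A, (x t k - x t i0) = (∑ k ∈ A, x t k) - (A.card : ℝ) * x t i0 := by
      rw [Finset.sum_sub_distrib, Finset.sum_const, nsmul_eq_mul]
    rw [hsplit] at hone
    linarith
  rw [hd t i0 hi0, ← hA]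
  have step1 : x t i0 + δ / (A.card : ℝ) ≤ (∑ k ∈ A, x t k) / (A.card : ℝ) := by
    rw [le_div_iff₀ hcA]
    have : (x t i0 + δ / (A.card:ℝ)) * (A.card:ℝ) = (A.card:ℝ) * x t i0 + δ := by
      field_simp
    rw [this]; exact hsum
  have step2 : δ / (S.card : ℝ) ≤ δ / (A.card : ℝ) := by
    apply div_le_div_of_nonneg_left hδ hcA
    exact_mod_cast hAS
  linarith

lemma arith_key {p q c e N : ℝ} (hc1 : 1 ≤ c) (he1 : 1 ≤ e) (hceN : c + e ≤ N)
    (hkey : 1 ≤ c * q - e * p) : p / c + 1 / (N * N) ≤ (p + q) / (c + e) := by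
  have hc0 : (0:ℝ) < c := by linarith
  have he0 : (0:ℝ) < e := by linarith
  have hce0 : (0:ℝ) < c + e := by linarith
  have hN0 : (0:ℝ) < N := by linarith
  have e2 : (p + q) / (c + e) - p / c = (c * q - e * p) / (c * (c + e)) := by
    rw [div_sub_div _ _ (ne_of_gt hce0) (ne_of_gt hc0), mul_comm (c + e) c]
    congr 1
    ring
  have h6 : 1 / (N * N) ≤ 1 / (c * (c + e)) := by
    apply one_div_le_one_div_of_le
    · positivity
    · nlinarith
  have h7 : 1 / (c * (c + e)) ≤ (c * q - e * p) / (c * (c + e)) :=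
    (div_le_div_iff_of_pos_right (by positivity)).mpr hkey
  linarith

lemma key_step (hd : KDyn S x) (t : ℕ) {i0 j1 : Fin n} (hi0 : i0 ∈ S) (hj1 : j1 ∈ S)
    (hmin : ∀ k ∈ S, x t i0 ≤ x t k)
    (hlt : x t i0 < x t j1) (hlt1 : x t j1 < x t i0 + 1) :
    x (t + 1) j1 = x (t + 1) i0 ∨
    x (t + 1) i0 + 1 / ((S.card : ℝ) * (S.card : ℝ)) ≤ x (t + 1) j1 := by
  set A := S.filter (fun k => |x t i0 - x t k| < 1) with hA
  set B := S.filter (fun k => |x t j1 - x t k| < 1) with hB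
  have hAB : A ⊆ B := by
    intro p hp
    rw [hA, Finset.mem_filter] at hp
    rw [hB, Finset.mem_filter]
    have h2 := abs_lt.mp hp.2
    have h3 := hmin p hp.1
    exact ⟨hp.1, abs_lt.mpr ⟨by linarith, by linarith⟩⟩
  by_cases hE : B \ A = ∅
  · left
    have hBA : B = A :=
      Finset.Subset.antisymm (Finset.sdiff_eq_empty_iff_subset.mp hE) hAB
    rw [hd t j1 hj1, hd t i0 hi0, ← hA, ← hB, hBA]
  · right
    have hEne : (B \ A).Nonempty := Finset.nonempty_iff_ne_empty.mpr hE
    have hi0A : i0 ∈ A := self_mem_nbr t hi0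
    have hcA1 : 1 ≤ A.card := Finset.card_pos.mpr ⟨i0, hi0A⟩
    have hcE1 : 1 ≤ (B \ A).card := Finset.card_pos.mpr hEne
    have hcardB : (B \ A).card + A.card = B.card := Finset.card_sdiff_add_card_eq_card hAB
    have hsumB : (∑ k ∈ B \ A, x t k) + ∑ k ∈ A, x t k = ∑ k ∈ B, x t k :=
      Finset.sum_sdiff hAB
    have hBS : B.card ≤ S.card := Finset.card_le_card (Finset.filter_subset _ _)
    -- bound on the sum over the extra agents
    have hqbd : ((B \ A).card : ℝ) * (x t i0 + 1) ≤ ∑ k ∈ B \ A, x t k := by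
      have h0 : ∀ k ∈ B \ A, x t i0 + 1 ≤ x t k := by
        intro k hk
        have hk' := Finset.mem_sdiff.mp hk
        have hkS : k ∈ S := (Finset.mem_filter.mp hk'.1).1
        have hnA : ¬ |x t i0 - x t k| < 1 := by
          intro h
          exact hk'.2 (by rw [hA, Finset.mem_filter]; exact ⟨hkS, h⟩)
        have h1' : 1 ≤ |x t i0 - x t k| := not_lt.mp hnA
        have h3 := hmin k hkS
        rcases le_abs'.mp h1' with h4 | h4 <;> linarith
      calc ((B \ A).card : ℝ) * (x t i0 + 1) = ∑ _k ∈ B \ A, (x t i0 + 1) := by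
            rw [Finset.sum_const, nsmul_eq_mul]
        _ ≤ ∑ k ∈ B \ A, x t k := Finset.sum_le_sum h0
    -- bound on the sum over the neighbourhood of the minimum
    have hpbd : ∑ k ∈ A, x t k ≤ (A.card : ℝ) * (x t i0 + 1) - 1 := by
      have hub : ∀ k ∈ A, x t k ≤ x t i0 + 1 := by
        intro k hk
        have hk' := Finset.mem_filter.mp hk
        have h2 := abs_lt.mp hk'.2
        linarith
      have hsplit : (∑ k ∈ A.erase i0, x t k) + x t i0 = ∑ k ∈ A, x t k :=
        Finset.sum_erase_add A _ hi0A
      have hcerase : ((A.erase i0).card : ℝ) = (A.card : ℝ) - 1 := by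
        rw [Finset.card_erase_of_mem hi0A]
        push_cast [hcA1]
        ring
      have herased : ∑ k ∈ A.erase i0, x t k ≤ ((A.card : ℝ) - 1) * (x t i0 + 1) := by
        calc ∑ k ∈ A.erase i0, x t k ≤ ∑ _k ∈ A.erase i0, (x t i0 + 1) :=
              Finset.sum_le_sum (fun k hk => hub k (Finset.mem_of_mem_erase hk))
          _ = ((A.erase i0).card : ℝ) * (x t i0 + 1) := by rw [Finset.sum_const, nsmul_eq_mul]
          _ = ((A.card : ℝ) - 1) * (x t i0 + 1) := by rw [hcerase]
      nlinarith [herased, hsplit]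
    -- assemble
    have hc1 : (1:ℝ) ≤ (A.card : ℝ) := by exact_mod_cast hcA1
    have he1 : (1:ℝ) ≤ ((B \ A).card : ℝ) := by exact_mod_cast hcE1
    have hceN : (A.card : ℝ) + ((B \ A).card : ℝ) ≤ (S.card : ℝ) := by
      have : (B \ A).card + A.card ≤ S.card := hcardB ▸ hBS
      exact_mod_cast by linarith [(by exact_mod_cast this : ((B \ A).card : ℝ) + (A.card : ℝ) ≤ (S.card : ℝ))]
    have hkey : 1 ≤ (A.card : ℝ) * (∑ k ∈ B \ A, x t k) -
        ((B \ A).card : ℝ) * ∑ k ∈ A, x t k := by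
      nlinarith [hqbd, hpbd, hc1, he1]
    rw [hd t j1 hj1, hd t i0 hi0, ← hA, ← hB]
    have hBsum : ∑ k ∈ B, x t k = (∑ k ∈ A, x t k) + ∑ k ∈ B \ A, x t k := by
      rw [← hsumB]; ring
    have hBcard : (B.card : ℝ) = (A.card : ℝ) + ((B \ A).card : ℝ) := by
      rw [← hcardB]
      push_cast
      ring
    rw [hBsum, hBcard]
    exact arith_key hc1 he1 hceN hkey

theorem freeze : ∀ (d : ℕ) (S : Finset (Fin n)) (x : ℕ → Fin n → ℝ),
    KDyn S x → (S.image (x 0)).card ≤ d → ∃ T, ∀ i ∈ S, x (T + 1) i = x T i := by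
  intro d
  induction d using Nat.strong_induction_on with
  | _ d IH =>
  intro S x hd hcard
  rcases S.eq_empty_or_nonempty with rfl | hS
  · exact ⟨0, by simp⟩
  obtain ⟨i0, hi0S, hi0min0⟩ := S.exists_min_image (x 0) hS
  have hmin : ∀ t, ∀ j ∈ S, x t i0 ≤ x t j := min_persist hd hi0S hi0min0
  obtain ⟨jM, hjMS, hjMmax⟩ := S.exists_max_image (x 0) hS
  have hub : ∀ t, ∀ j ∈ S, x t j ≤ x 0 jM := ub_persist hd hjMmax
  by_cases hB : ∃ t, (S.image (x t)).card < d
  · -- the number of distinct values drops : use the induction hypothesis after time t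
    obtain ⟨t, htB⟩ := hB
    have hd' : KDyn S (fun s => x (t + s)) := fun s i hi => hd (t + s) i hi
    obtain ⟨T, hT⟩ := IH _ htB S (fun s => x (t + s)) hd' le_rfl
    exact ⟨t + T, hT⟩
  by_cases hC : ∃ t, ∀ j ∈ S, x t j = x t i0 ∨ x t i0 + 1 ≤ x t j
  · -- the bottom class separates : it freezes, recurse on the rest
    obtain ⟨t, ht⟩ := hC
    have hinv := gap_invariant hd t (x t i0) ht
    set S' := S.filter (fun j => x t i0 + 1 ≤ x t j) with hS'
    have hd' : KDyn S' (fun s => x (t + s)) := by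
      intro s j hj
      have hjS' := Finset.mem_filter.mp (hS' ▸ hj)
      have hjS : j ∈ S := hjS'.1
      have hfilter : S.filter (fun k => |x (t + s) j - x (t + s) k| < 1)
          = S'.filter (fun k => |x (t + s) j - x (t + s) k| < 1) := by
        apply Finset.ext
        intro k
        constructor
        · intro hk
          rw [Finset.mem_filter] at hk
          rw [Finset.mem_filter]
          refine ⟨?_, hk.2⟩
          rw [hS', Finset.mem_filter]
          refine ⟨hk.1, ?_⟩
          rcases ht k hk.1 with hk1 | hk2
          · exfalso
            have h5 : x (t + s) k = x t i0 := (hinv s k hk.1).1 hk1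
            have h6 : x t i0 + 1 ≤ x (t + s) j := (hinv s j hjS).2 hjS'.2
            have h7 := abs_lt.mp hk.2
            rw [h5] at h7
            linarith [h7.2]
          · exact hk2
        · intro hk
          rw [Finset.mem_filter] at hk ⊢
          have h8 := hk.1
          rw [hS', Finset.mem_filter] at h8
          exact ⟨h8.1, hk.2⟩
      have h9 := hd (t + s) j hjS
      rw [hfilter] at h9
      exact h9
    have himg : (S'.image (x t)).card < d := by
      have hsub : S'.image (x t) ⊆ (S.image (x t)).erase (x t i0) := by
        intro v hv
        rw [Finset.mem_image] at hv
        obtain ⟨j, hj, rfl⟩ := hv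
        have hj' := Finset.mem_filter.mp (hS' ▸ hj)
        apply Finset.mem_erase.mpr
        constructor
        · have := hj'.2
          intro h
          rw [h] at this
          linarith
        · exact Finset.mem_image_of_mem _ hj'.1
      have h2 : ((S.image (x t)).erase (x t i0)).card < (S.image (x t)).card :=
        Finset.card_erase_lt_of_mem (Finset.mem_image_of_mem _ hi0S)
      have h3 : (S.image (x t)).card ≤ d :=
        le_trans (image_card_anti hd 0 t (Nat.zero_le t)) hcard
      exact lt_of_le_of_lt (Finset.card_le_card hsub) (lt_of_lt_of_le h2 h3)
    obtain ⟨T, hT⟩ := IH _ himg S' (fun s => x (t + s)) hd' le_rfl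
    refine ⟨t + T, fun i hi => ?_⟩
    by_cases hiS' : i ∈ S'
    · exact hT i hiS'
    · have hibot : x t i = x t i0 := by
        rcases ht i hi with h | h
        · exact h
        · exact absurd (hS' ▸ Finset.mem_filter.mpr ⟨hi, h⟩) hiS'
      have e1 : x (t + T) i = x t i0 := (hinv T i hi).1 hibot
      have e2 : x (t + (T + 1)) i = x t i0 := (hinv (T + 1) i hi).1 hibot
      exact e2.trans e1.symm
  -- neither happens : contradiction via strictly increasing minimum
  exfalso
  push_neg at hB hC
  have hsec : ∀ t, ∃ j1 ∈ S, x t i0 < x t j1 ∧ x t j1 < x t i0 + 1 ∧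
      ∀ k ∈ S, x t k ≠ x t i0 → x t j1 ≤ x t k := by
    intro t
    obtain ⟨jc, hjcS, hjc⟩ := hC t
    have hS'ne : (S.filter (fun k => x t k ≠ x t i0)).Nonempty :=
      ⟨jc, Finset.mem_filter.mpr ⟨hjcS, hjc.1⟩⟩
    obtain ⟨j1, hj1, hj1min⟩ := Finset.exists_min_image _ (x t) hS'ne
    have hj1' := Finset.mem_filter.mp hj1
    refine ⟨j1, hj1'.1, lt_of_le_of_ne (hmin t j1 hj1'.1) (Ne.symm hj1'.2), ?_, ?_⟩
    · exact lt_of_le_of_lt (hj1min jc (Finset.mem_filter.mpr ⟨hjcS, hjc.1⟩)) hjc.2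
    · exact fun k hk hkne => hj1min k (Finset.mem_filter.mpr ⟨hk, hkne⟩)
  have hQ2 : ∀ t, ∀ j ∈ S, x (t + 1) j = x (t + 1) i0 ∨
      x (t + 1) i0 + 1 / ((S.card : ℝ) * (S.card : ℝ)) ≤ x (t + 1) j := by
    intro t j hj
    obtain ⟨j1, hj1S, hj1a, hj1b, hj1min⟩ := hsec t
    rcases key_step hd t hi0S hj1S (hmin t) hj1a hj1b with hmerge | hgap
    · exfalso
      have hdec := merge_decrease hd t hi0S hj1S (ne_of_lt hj1a) hmerge.symm
      have h4 := hB (t + 1)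
      have h3 : (S.image (x t)).card ≤ d :=
        le_trans (image_card_anti hd 0 t (Nat.zero_le _)) hcard
      omega
    · by_cases hjbot : x t j = x t i0
      · exact Or.inl (eq_step hd t hj hi0S hjbot)
      · refine Or.inr ?_
        have := order_pres hd t hj1S hj (hj1min j hj hjbot)
        linarith
  have hcS : (0:ℝ) < S.card := by exact_mod_cast Finset.card_pos.mpr hS
  have hgrow : ∀ t, x (t + 1) i0 + 1 / ((S.card : ℝ) * (S.card : ℝ)) / (S.card : ℝ)
      ≤ x (t + 2) i0 := by
    intro t
    obtain ⟨j, hjS, hja⟩ := hC (t + 1)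
    rcases hQ2 t j hjS with h | h
    · exact absurd h hja.1
    · exact min_grow hd (t + 1) hi0S hjS (hmin (t + 1)) (by positivity) h hja.2
  set c : ℝ := 1 / ((S.card : ℝ) * (S.card : ℝ)) / (S.card : ℝ) with hcdef
  have hc0 : 0 < c := by rw [hcdef]; positivity
  have hlin : ∀ k : ℕ, x 1 i0 + k * c ≤ x (k + 1) i0 := by
    intro k
    induction k with
    | zero => simp
    | succ k ih =>
      have hg := hgrow k
      have : x 1 i0 + ((k : ℝ) + 1) * c = (x 1 i0 + k * c) + c := by ring
      push_cast
      rw [this]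
      calc (x 1 i0 + k * c) + c ≤ x (k + 1) i0 + c := by linarith
      _ ≤ x (k + 2) i0 := hg
  obtain ⟨k, hk⟩ := exists_nat_gt ((x 0 jM - x 1 i0) / c)
  have h1 : x 0 jM - x 1 i0 < k * c := by
    rw [div_lt_iff₀ hc0] at hk
    linarith
  have h2 := hlin k
  have h3 := hub (k + 1) i0 hi0S
  linarith

lemma sep_of_frozen (hd : KDyn S x) (T : ℕ) (hfr : ∀ i ∈ S, x (T + 1) i = x T i) :
    ∀ i ∈ S, ∀ j ∈ S, x T i = x T j ∨ 1 ≤ |x T i - x T j| := by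
  by_contra h
  push_neg at h
  obtain ⟨i, hiS, j, hjS, hne, hlt⟩ := h
  classical
  set W := S.filter (fun i => ∃ j ∈ S, |x T i - x T j| < 1 ∧ x T i ≠ x T j) with hW
  have hWne : W.Nonempty := ⟨i, Finset.mem_filter.mpr ⟨hiS, j, hjS, hlt, hne⟩⟩
  obtain ⟨i1, hi1W, hi1min⟩ := Finset.exists_min_image W (x T) hWne
  have hi1W' := Finset.mem_filter.mp hi1W
  obtain ⟨j1, hj1S, hj1lt, hj1ne⟩ := hi1W'.2
  have hi1S : i1 ∈ S := hi1W'.1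
  have hj1gt : x T i1 < x T j1 := by
    rcases lt_or_gt_of_ne hj1ne with h1 | h1
    · exact h1
    · exfalso
      have hj1W : j1 ∈ W := Finset.mem_filter.mpr
        ⟨hj1S, i1, hi1S, by rw [abs_sub_comm]; exact hj1lt, (Ne.symm hj1ne)⟩
      have := hi1min j1 hj1W
      linarith
  have hnbrge : ∀ k ∈ S.filter (fun k => |x T i1 - x T k| < 1), x T i1 ≤ x T k := by
    intro k hk
    have hk' := Finset.mem_filter.mp hk
    by_contra hlt2
    push_neg at hlt2
    have hkW : k ∈ W := Finset.mem_filter.mpr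
      ⟨hk'.1, i1, hi1S, by rw [abs_sub_comm]; exact hk'.2, ne_of_lt hlt2⟩
    have := hi1min k hkW
    linarith
  have hj1mem : j1 ∈ S.filter (fun k => |x T i1 - x T k| < 1) :=
    Finset.mem_filter.mpr ⟨hj1S, hj1lt⟩
  have hstrict := const_lt_avg hnbrge hj1mem hj1gt
  have hfix : x T i1 = (∑ k ∈ S.filter (fun k => |x T i1 - x T k| < 1), x T k) /
      ((S.filter (fun k => |x T i1 - x T k| < 1)).card : ℝ) :=
    (hfr i1 hi1S).symm.trans (hd T i1 hi1S)
  linarith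

end KrauseAux

/-- In the Krause model, opinions converge in finite time, and any
two limiting values are either equal or at distance at least 1. -/
theorem krause_finite_time_convergence (n : ℕ) (x : ℕ → Fin n → ℝ)
    (hupd : ∀ t (i : Fin n), x (t + 1) i =
      (∑ j ∈ Finset.univ.filter (fun j => |x t i - x t j| < 1), x t j) /
      ((Finset.univ.filter (fun j => |x t i - x t j| < 1)).card : ℝ)) :
    ∃ (xstar : Fin n → ℝ) (T : ℕ),
      (∀ i : Fin n, ∀ t ≥ T, x t i = xstar i) ∧
      (∀ i j : Fin n, xstar i = xstar j ∨ 1 ≤ |xstar i - xstar j|) := by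
  have hd : KrauseAux.KDyn Finset.univ x := fun t i _ => hupd t i
  obtain ⟨T, hT⟩ := KrauseAux.freeze ((Finset.univ.image (x 0)).card) Finset.univ x hd le_rfl
  have hdet : ∀ t, T ≤ t → ∀ i, x t i = x T i := by
    intro t ht
    induction t, ht using Nat.le_induction with
    | base => intro i; rfl
    | succ t _ ih =>
      intro i
      have hfun : x t = x T := funext ih
      have e := hupd t i
      rw [hfun] at e
      rw [e, ← hupd T i]
      exact hT i (Finset.mem_univ i)
  refine ⟨x T, T, fun i t ht => hdet t ht i, fun i j => ?_⟩
  exact KrauseAux.sep_of_frozen hd T hT i (Finset.mem_univ i) j (Finset.mem_univ j)
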